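/- Let β be a real number with 1 < β < 2 and let u be a positive integer. Then ((β-1)/β) · (u^{2-β} - 1)/(2-β) ≤ (∑_{i=1}^{u} i^{1-β}) / (∑_{i=1}^{u} i^{-β}) ≤ u^{2-β}/(2-β). In particular, the expectation of a random variable distributed according to the power-law distribution with exponent β and upper limit u is Θ(u^{2-β}). -/

import Mathlib

open MeasureTheory Finset

lemma anti_rpow (c : ℝ) (hc : c ≤ 0) (b : ℝ) :
    AntitoneOn (fun x : ℝ => x ^ c) (Set.Icc 1 b) := by
  intro x hx y hy hxy
  exact Real.rpow_le_rpow_of_nonpos (lt_of_lt_of_le one_pos hx.1) hxy hc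

-- sum from 1 to u of i^c, c ≤ 0, lower bound by integral
lemma int_le_sum (c : ℝ) (hc : c ≤ 0) (hc1 : -1 < c) (u : ℕ) (hu : 0 < u) :
    ((u : ℝ) ^ (c + 1) - 1) / (c + 1) ≤ ∑ i ∈ Finset.Icc 1 u, (i : ℝ) ^ c := by
  have h := AntitoneOn.integral_le_sum_Ico (f := fun x : ℝ => x ^ c) (a := 1) (b := u) hu
    (by simpa using anti_rpow c hc u)
  rw [integral_rpow (Or.inl hc1)] at h
  simp only [Nat.cast_one, Real.one_rpow] at h
  refine h.trans (Finset.sum_le_sum_of_subset_of_nonneg ?_ ?_)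
  · exact Finset.Ico_subset_Icc_self
  · intro i _ _
    positivity

lemma sum_le_int (c : ℝ) (hc : c ≤ 0) (u : ℕ) (hu : 0 < u) :
    ∑ i ∈ Finset.Icc 1 u, (i : ℝ) ^ c ≤ 1 + ∫ x in (1:ℝ)..u, x ^ c := by
  have h := AntitoneOn.sum_le_integral_Ico (f := fun x : ℝ => x ^ c) (a := 1) (b := u) hu
    (by simpa using anti_rpow c hc u)
  have e : ∑ i ∈ Finset.Icc 1 u, ((i:ℝ)) ^ c
      = 1 + ∑ i ∈ Finset.Ico 1 u, ((i + 1 : ℕ) : ℝ) ^ c := by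
    rw [← Finset.Ico_add_one_right_eq_Icc, Finset.sum_eq_sum_Ico_succ_bot (by omega)]
    simp only [Nat.cast_one, Real.one_rpow]
    congr 1
    rw [← Finset.sum_Ico_add' (fun (i:ℕ) => ((i:ℝ))^c) 1 u 1]
  rw [e]
  simp only [Nat.cast_one] at h
  linarith [h]

theorem expectation_theta_u_pow (β : ℝ) (hβ1 : 1 < β) (hβ2 : β < 2) (u : ℕ) (hu : 0 < u) :
    (β - 1) / β * (((u : ℝ) ^ (2 - β) - 1) / (2 - β)) ≤
      (∑ i ∈ Finset.Icc 1 u, (i : ℝ) ^ (1 - β)) / (∑ i ∈ Finset.Icc 1 u, (i : ℝ) ^ (-β)) ∧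
    (∑ i ∈ Finset.Icc 1 u, (i : ℝ) ^ (1 - β)) / (∑ i ∈ Finset.Icc 1 u, (i : ℝ) ^ (-β)) ≤
      (u : ℝ) ^ (2 - β) / (2 - β) := by
  set S1 := ∑ i ∈ Finset.Icc 1 u, (i : ℝ) ^ (1 - β) with hS1def
  set S0 := ∑ i ∈ Finset.Icc 1 u, (i : ℝ) ^ (-β) with hS0def
  have h2β : 0 < 2 - β := by linarith
  have hβ0 : 0 < β := by linarith
  have hu1 : (1:ℝ) ≤ (u:ℝ) := by exact_mod_cast hu
  have hA1 : (1:ℝ) ≤ (u:ℝ) ^ (2 - β) := Real.one_le_rpow hu1 (le_of_lt h2β)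
  -- lower bound on S1
  have key1 : ((u : ℝ) ^ (2 - β) - 1) / (2 - β) ≤ S1 := by
    have := int_le_sum (1 - β) (by linarith) (by linarith) u hu
    rw [show (1 - β + 1) = 2 - β by ring] at this
    exact this
  -- S1 nonneg
  have hS1 : 0 ≤ S1 := Finset.sum_nonneg fun i _ => by positivity
  -- S0 ≥ 1
  have key4 : 1 ≤ S0 := by
    have h1 : (1:ℕ) ∈ Finset.Icc 1 u := by simp; omega
    have := Finset.single_le_sum (f := fun i : ℕ => (i:ℝ) ^ (-β))
      (fun i _ => by positivity) h1
    simpa using this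
  have hS0 : 0 < S0 := by linarith
  -- S0 ≤ β/(β-1)
  have key3 : S0 ≤ β / (β - 1) := by
    have h := sum_le_int (-β) (by linarith) u hu
    have hne : -β ≠ -1 := fun hc => by have := neg_injective hc; linarith
    have hmem : (0:ℝ) ∉ Set.uIcc 1 (u:ℝ) := by
      rw [Set.uIcc_of_le hu1]; rintro ⟨h0, -⟩; linarith
    rw [integral_rpow (Or.inr ⟨hne, hmem⟩)] at h
    simp only [Nat.cast_one, Real.one_rpow] at h
    have hx : (0:ℝ) ≤ (u:ℝ) ^ (-β + 1) := by positivity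
    have e1 : ((u:ℝ) ^ (-β + 1) - 1) / (-β + 1) = (1 - (u:ℝ) ^ (-β + 1)) / (β - 1) := by
      rw [div_eq_div_iff (by linarith) (by linarith)]; ring
    have hub : ((u:ℝ) ^ (-β + 1) - 1) / (-β + 1) ≤ 1 / (β - 1) := by
      rw [e1]; gcongr <;> linarith
    have hle : S0 ≤ 1 + 1 / (β - 1) := by linarith
    have e : 1 + 1 / (β - 1) = β / (β - 1) := by
      rw [eq_div_iff (by linarith : β - 1 ≠ 0), add_mul, one_mul,
        div_mul_cancel₀ _ (by linarith : β - 1 ≠ 0)]; ring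
    linarith [e ▸ hle]
  -- S1 ≤ u^{2-β}/(2-β)
  have key2 : S1 ≤ (u : ℝ) ^ (2 - β) / (2 - β) := by
    have h := sum_le_int (1 - β) (by linarith) u hu
    rw [integral_rpow (Or.inl (by linarith))] at h
    simp only [Nat.cast_one, Real.one_rpow] at h
    rw [show (1 - β + 1) = 2 - β by ring] at h
    have e2 : 1 + ((u:ℝ) ^ (2 - β) - 1) / (2 - β)
        = ((2 - β) + ((u:ℝ) ^ (2 - β) - 1)) / (2 - β) := by
      rw [add_div, div_self (ne_of_gt h2β)]
    have : 1 + ((u:ℝ) ^ (2 - β) - 1) / (2 - β) ≤ (u : ℝ) ^ (2 - β) / (2 - β) := by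
      rw [e2]; gcongr; linarith
    linarith
  constructor
  · have h1 : S1 / (β / (β - 1)) ≤ S1 / S0 := by
      apply div_le_div_of_nonneg_left hS1 hS0 key3
    have h2 : S1 / (β / (β - 1)) = (β - 1) / β * S1 := by
      rw [div_div_eq_mul_div, div_eq_mul_inv, mul_comm]
      field_simp
    have h3 : (β - 1) / β * (((u : ℝ) ^ (2 - β) - 1) / (2 - β)) ≤ (β - 1) / β * S1 :=
      mul_le_mul_of_nonneg_left key1 (div_nonneg (by linarith) (by linarith))
    linarith [h2 ▸ h1]
  · calc S1 / S0 ≤ S1 / 1 := div_le_div_of_nonneg_left hS1 one_pos key4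
    _ = S1 := div_one S1
    _ ≤ _ := key2
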